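/- Uniqueness of one-particle structures: if (K, H) and (K′, H′) are two one-particle structures for the same data (Sol, τ, μ) — i.e., both K and K′ are ℝ-linear maps into complex Hilbert spaces with K(Sol) + iK(Sol) dense (respectively for K′) and ⟨Kx, Ky⟩ = μ(x,y) + (i/2)τ(x,y) = ⟨K′x, K′y⟩ — then there exists a surjective isometric (unitary) operator V : H → H′ with V∘K = K′. -/

import Mathlib

/-- Uniqueness of one-particle structures: if `(K, H)` and `(K', H')` are one-particle
structures for the same data `(Sol, τ, μ)` — `K(Sol) + iK(Sol)` dense in `H` (and similarly
for `K'`) and `⟨Kx, Ky⟩ = μ(x,y) + (i/2)τ(x,y) = ⟨K'x, K'y⟩` — then there is a surjective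
isometric (unitary) operator `V : H → H'` with `V ∘ K = K'`. -/
theorem stmt_18 {Sol H H' : Type*} [AddCommGroup Sol] [Module ℝ Sol]
    [NormedAddCommGroup H] [InnerProductSpace ℂ H] [CompleteSpace H]
    [NormedAddCommGroup H'] [InnerProductSpace ℂ H'] [CompleteSpace H']
    (τ μ : Sol →ₗ[ℝ] Sol →ₗ[ℝ] ℝ)
    (hτ : ∀ x y : Sol, τ x y = - τ y x) (hμ : ∀ x y : Sol, μ x y = μ y x)
    (hineq : ∀ x y : Sol, |τ x y| ^ 2 / 4 ≤ μ x x * μ y y)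
    (K : Sol →ₗ[ℝ] H) (K' : Sol →ₗ[ℝ] H')
    (hdense : Dense ((Submodule.span ℂ (Set.range K) : Submodule ℂ H) : Set H))
    (hdense' : Dense ((Submodule.span ℂ (Set.range K') : Submodule ℂ H') : Set H'))
    (hK : ∀ x y : Sol,
      (inner ℂ (K x) (K y) : ℂ) = (μ x y : ℂ) + (Complex.I / 2) * (τ x y : ℂ))
    (hK' : ∀ x y : Sol,
      (inner ℂ (K' x) (K' y) : ℂ) = (μ x y : ℂ) + (Complex.I / 2) * (τ x y : ℂ)) :
    ∃ V : H ≃ₗᵢ[ℂ] H', ∀ x : Sol, V (K x) = K' x := by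
  classical
  let f : Sol → WithLp 2 (H × H') := fun x => (WithLp.equiv 2 (H × H')).symm (K x, K' x)
  have hf1 : ∀ x, (f x).fst = K x := fun x => rfl
  have hf2 : ∀ x, (f x).snd = K' x := fun x => rfl
  have hKK' : ∀ x y : Sol, (inner ℂ (K x) (K y) : ℂ) = inner ℂ (K' x) (K' y) := by
    intro x y; rw [hK, hK']
  set S : Submodule ℂ (WithLp 2 (H × H')) := Submodule.span ℂ (Set.range f) with hSdef
  -- inner products of the two components agree on S
  have key1 : ∀ x : Sol, ∀ q ∈ S, (inner ℂ (f x).fst q.fst : ℂ) = inner ℂ (f x).snd q.snd := by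
    intro x q hq
    induction hq using Submodule.span_induction with
    | mem q hq =>
      obtain ⟨y, rfl⟩ := hq
      simpa [hf1, hf2] using hKK' x y
    | zero => simp
    | add a b ha hb iha ihb => simp only [WithLp.add_fst, WithLp.add_snd, inner_add_right, iha, ihb]
    | smul c a ha iha => simp only [WithLp.smul_fst, WithLp.smul_snd, inner_smul_right, iha]
  have key : ∀ p ∈ S, ∀ q ∈ S, (inner ℂ p.fst q.fst : ℂ) = inner ℂ p.snd q.snd := by
    intro p hp
    induction hp using Submodule.span_induction with
    | mem p hp =>
      obtain ⟨y, rfl⟩ := hp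
      exact key1 y
    | zero => simp
    | add a b ha hb iha ihb =>
      intro q hq
      simp only [WithLp.add_fst, WithLp.add_snd, inner_add_left, iha q hq, ihb q hq]
    | smul c a ha iha =>
      intro q hq
      simp only [WithLp.smul_fst, WithLp.smul_snd, inner_smul_left, iha q hq]
  -- extend to the closure
  have cont_fst : Continuous fun p : WithLp 2 (H × H') => p.fst :=
    continuous_fst.comp (WithLp.prodContinuousLinearEquiv 2 ℂ H H').continuous
  have cont_snd : Continuous fun p : WithLp 2 (H × H') => p.snd :=
    continuous_snd.comp (WithLp.prodContinuousLinearEquiv 2 ℂ H H').continuous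
  have keyc : ∀ p ∈ S.topologicalClosure, ∀ q ∈ S.topologicalClosure,
      (inner ℂ p.fst q.fst : ℂ) = inner ℂ p.snd q.snd := by
    have step1 : ∀ p ∈ S, ∀ q ∈ S.topologicalClosure,
        (inner ℂ p.fst q.fst : ℂ) = inner ℂ p.snd q.snd := by
      intro p hp
      have hcl : IsClosed {q : WithLp 2 (H × H') | (inner ℂ p.fst q.fst : ℂ) = inner ℂ p.snd q.snd} := by
        apply isClosed_eq
        · exact (Continuous.inner continuous_const cont_fst)
        · exact (Continuous.inner continuous_const cont_snd)
      intro q hq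
      exact hcl.closure_subset (closure_mono (fun r hr => key p hp r hr) hq)
    intro p hp q hq
    have hcl : IsClosed {p : WithLp 2 (H × H') | (inner ℂ p.fst q.fst : ℂ) = inner ℂ p.snd q.snd} := by
      apply isClosed_eq
      · exact (Continuous.inner cont_fst continuous_const)
      · exact (Continuous.inner cont_snd continuous_const)
    exact hcl.closure_subset (closure_mono (fun r hr => step1 r hr q hq) hp)
  set G : Submodule ℂ (WithLp 2 (H × H')) := S.topologicalClosure with hGdef
  haveI : CompleteSpace G := S.isClosed_topologicalClosure.completeSpace_coe
  -- the two coordinate projections, as continuous linear maps on G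
  let A : G →L[ℂ] H := (ContinuousLinearMap.fst ℂ H H').comp
    (((WithLp.prodContinuousLinearEquiv 2 ℂ H H').toContinuousLinearMap).comp G.subtypeL)
  let B : G →L[ℂ] H' := (ContinuousLinearMap.snd ℂ H H').comp
    (((WithLp.prodContinuousLinearEquiv 2 ℂ H H').toContinuousLinearMap).comp G.subtypeL)
  have hA : ∀ p : G, A p = (p : WithLp 2 (H × H')).fst := fun p => rfl
  have hB : ∀ p : G, B p = (p : WithLp 2 (H × H')).snd := fun p => rfl
  have keyG : ∀ p q : G, (inner ℂ (A p) (A q) : ℂ) = inner ℂ (B p) (B q) := by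
    intro p q
    exact keyc p p.2 q q.2
  have normAB : ∀ p : G, ‖A p‖ = ‖B p‖ := by
    intro p
    have h := keyG p p
    rw [inner_self_eq_norm_sq_to_K, inner_self_eq_norm_sq_to_K] at h
    have h2 : (‖A p‖ : ℝ) ^ 2 = ‖B p‖ ^ 2 := by exact_mod_cast h
    nlinarith [norm_nonneg (A p), norm_nonneg (B p)]
  have normG : ∀ p : G, ‖(p : WithLp 2 (H × H'))‖ ^ 2 = 2 * ‖A p‖ ^ 2 := by
    intro p
    rw [WithLp.prod_norm_sq_eq_of_L2, ← hA p, ← hB p, ← normAB p]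
    ring
  have memG : ∀ x : Sol, f x ∈ G :=
    fun x => Submodule.le_topologicalClosure S (Submodule.subset_span ⟨x, rfl⟩)
  have bound : ∀ p : G, ‖p‖ ≤ ((2 : NNReal) : ℝ) * ‖A p‖ := by
    intro p
    have h1 : ‖p‖ ^ 2 = 2 * ‖A p‖ ^ 2 := normG p
    have h2 : (0:ℝ) ≤ 2 * ‖A p‖ := by positivity
    calc ‖p‖ = Real.sqrt (‖p‖ ^ 2) := (Real.sqrt_sq (norm_nonneg _)).symm
      _ ≤ Real.sqrt ((2 * ‖A p‖) ^ 2) := Real.sqrt_le_sqrt (by nlinarith [sq_nonneg ‖A p‖])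
      _ = 2 * ‖A p‖ := Real.sqrt_sq h2
      _ = ((2 : NNReal) : ℝ) * ‖A p‖ := by norm_num
  have boundB : ∀ p : G, ‖p‖ ≤ ((2 : NNReal) : ℝ) * ‖B p‖ := by
    intro p
    rw [← normAB p]
    exact bound p
  have anti : AntilipschitzWith 2 A := A.antilipschitz_of_bound bound
  have antiB : AntilipschitzWith 2 B := B.antilipschitz_of_bound boundB
  have injA : Function.Injective A := anti.injective
  have injB : Function.Injective B := antiB.injective
  have closedRangeA : IsClosed (Set.range A) := anti.isClosed_range A.uniformContinuous
  have closedRangeB : IsClosed (Set.range B) := antiB.isClosed_range B.uniformContinuous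
  have surjA : Function.Surjective A := by
    have hsub : ((Submodule.span ℂ (Set.range K) : Submodule ℂ H) : Set H) ⊆ Set.range A := by
      intro u hu
      have hle : Submodule.span ℂ (Set.range K) ≤ LinearMap.range (A : ↥G →ₗ[ℂ] H) := by
        rw [Submodule.span_le]
        rintro _ ⟨x, rfl⟩
        exact ⟨⟨f x, memG x⟩, rfl⟩
      obtain ⟨g, hg⟩ := hle hu
      exact ⟨g, hg⟩
    intro u
    have hm : u ∈ closure (Set.range A) :=
      closure_mono hsub (by rw [hdense.closure_eq]; trivial)
    rwa [closedRangeA.closure_eq] at hm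
  have surjB : Function.Surjective B := by
    have hsub : ((Submodule.span ℂ (Set.range K') : Submodule ℂ H') : Set H') ⊆ Set.range B := by
      intro u hu
      have hle : Submodule.span ℂ (Set.range K') ≤ LinearMap.range (B : ↥G →ₗ[ℂ] H') := by
        rw [Submodule.span_le]
        rintro _ ⟨x, rfl⟩
        exact ⟨⟨f x, memG x⟩, rfl⟩
      obtain ⟨g, hg⟩ := hle hu
      exact ⟨g, hg⟩
    intro u
    have hm : u ∈ closure (Set.range B) :=
      closure_mono hsub (by rw [hdense'.closure_eq]; trivial)
    rwa [closedRangeB.closure_eq] at hm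
  let eA : ↥G ≃ₗ[ℂ] H := LinearEquiv.ofBijective (A : ↥G →ₗ[ℂ] H) ⟨injA, surjA⟩
  let eB : ↥G ≃ₗ[ℂ] H' := LinearEquiv.ofBijective (B : ↥G →ₗ[ℂ] H') ⟨injB, surjB⟩
  refine ⟨{ toLinearEquiv := eA.symm.trans eB, norm_map' := ?_ }, ?_⟩
  · intro u
    have h1 : A (eA.symm u) = u := eA.apply_symm_apply u
    calc ‖eB (eA.symm u)‖ = ‖B (eA.symm u)‖ := rfl
      _ = ‖A (eA.symm u)‖ := (normAB _).symm
      _ = ‖u‖ := by rw [h1]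
  · intro x
    have hax : eA ⟨f x, memG x⟩ = K x := rfl
    have h2 : eA.symm (K x) = ⟨f x, memG x⟩ := by
      rw [← hax]; exact eA.symm_apply_apply _
    show eB (eA.symm (K x)) = K' x
    rw [h2]; rfl
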